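/- If A and B are residually finite groups, then the free product A ∗ B is residually finite. -/

import Mathlib

/-- A group `G` is residually finite if every nontrivial element survives in some
finite quotient. -/
def ResiduallyFinite (G : Type*) [Group G] : Prop :=
  ∀ g : G, g ≠ 1 → ∃ (F : Type) (_ : Group F) (_ : Finite F) (φ : G →* F), φ g ≠ 1

namespace RFFP

open Monoid Monoid.CoprodI

universe u v

variable {M : Bool → Type u} [∀ b, Group (M b)]
variable {FA FB : Type} [Group FA] [Group FB]

/-- Image of a letter in `FA` (trivial for `B`-letters). -/
def pushA (φA : M true →* FA) : (Σ b, M b) → FA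
  | ⟨true, a⟩ => φA a
  | ⟨false, _⟩ => 1

/-- Image of a letter in `FB` (trivial for `A`-letters). -/
def pushB (φB : M false →* FB) : (Σ b, M b) → FB
  | ⟨true, _⟩ => 1
  | ⟨false, b⟩ => φB b

def Xv (φA : M true →* FA) (l : List (Σ b, M b)) : FA := (l.map (pushA φA)).prod

def Yv (φB : M false →* FB) (l : List (Σ b, M b)) : FB := (l.map (pushB φB)).prod

@[simp] lemma Xv_nil (φA : M true →* FA) : Xv φA [] = 1 := rfl
@[simp] lemma Yv_nil (φB : M false →* FB) : Yv φB [] = 1 := rfl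

@[simp] lemma Xv_consA (φA : M true →* FA) (a : M true) (l) :
    Xv φA (⟨true, a⟩ :: l) = φA a * Xv φA l := by simp [Xv, pushA]

@[simp] lemma Xv_consB (φA : M true →* FA) (b : M false) (l) :
    Xv φA (⟨false, b⟩ :: l) = Xv φA l := by simp [Xv, pushA]

@[simp] lemma Yv_consA (φB : M false →* FB) (a : M true) (l) :
    Yv φB (⟨true, a⟩ :: l) = Yv φB l := by simp [Yv, pushB]

@[simp] lemma Yv_consB (φB : M false →* FB) (b : M false) (l) :
    Yv φB (⟨false, b⟩ :: l) = φB b * Yv φB l := by simp [Yv, pushB]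

/-- The suffix of `L` of length `t` (or all of `L` if `t ≥ L.length`). -/
def sfx (L : List (Σ b, M b)) (t : ℕ) : List (Σ b, M b) := L.drop (L.length - t)

omit [∀ b, Group (M b)] in
lemma sfx_of_suffix {L l : List (Σ b, M b)} (h : l <:+ L) : sfx L l.length = l := by
  obtain ⟨p, rfl⟩ := h
  rw [sfx, List.length_append, Nat.add_sub_cancel, List.drop_left]

/-- The letter at position `t` (counting from the right, 1-based) is an `A`-letter. -/
def Apos (L : List (Σ b, M b)) (t : ℕ) : Prop :=
  ((sfx L t).head?).map Sigma.fst = some true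

/-- The letter at position `t` is a `B`-letter. -/
def Bpos (L : List (Σ b, M b)) (t : ℕ) : Prop :=
  ((sfx L t).head?).map Sigma.fst = some false

omit [∀ b, Group (M b)] in
lemma sfx_succ {L : List (Σ b, M b)} {t : ℕ} (h : t + 1 ≤ L.length) :
    sfx L (t + 1) = L[L.length - (t+1)]'(by omega) :: sfx L t := by
  rw [sfx, sfx, show L.length - t = L.length - (t+1) + 1 from by omega]
  exact List.drop_eq_getElem_cons (by omega)

omit [∀ b, Group (M b)] in
lemma not_pos_pos {L : List (Σ b, M b)} (hch : L.Chain' fun c c' => c.1 ≠ c'.1)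
    {t : ℕ} (ht : t + 1 ≤ L.length) {i : Bool}
    (h1 : ((sfx L t).head?).map Sigma.fst = some i)
    (h2 : ((sfx L (t+1)).head?).map Sigma.fst = some i) : False := by
  rw [sfx_succ ht] at h2
  have hchain : (sfx L (t+1)).Chain' fun c c' => c.1 ≠ c'.1 := by
    rw [sfx]; exact hch.drop _
  rw [sfx_succ ht, List.Chain', List.isChain_cons] at hchain
  obtain ⟨c', hc', hfst⟩ : ∃ c', (sfx L t).head? = some c' ∧ c'.1 = i := by
    cases hh : (sfx L t).head? with
    | none => rw [hh] at h1; simp at h1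
    | some c' => rw [hh] at h1; simp at h1; exact ⟨c', rfl, h1⟩
  have := hchain.1 c' (by rw [hc']; rfl)
  simp only [List.head?_cons, Option.map_some, Option.some.injEq] at h2
  rw [h2, hfst] at this
  exact this rfl

open scoped Classical in
/-- The `A`-side swapping involution. -/
noncomputable def fAfun (φA : M true →* FA) (φB : M false →* FB) (L : List (Σ b, M b)) :
    Fin (L.length + 1) × FA × FB → Fin (L.length + 1) × FA × FB := fun p =>
  if h : p.1.val + 1 ≤ L.length ∧ Apos L (p.1.val + 1) ∧ p.2.1 = Xv φA (sfx L (p.1.val + 1))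
      ∧ p.2.2 = Yv φB (sfx L p.1.val) then
    (⟨p.1.val + 1, Nat.lt_succ_of_le h.1⟩, p.2)
  else if h2 : 1 ≤ p.1.val ∧ Apos L p.1.val ∧ p.2.1 = Xv φA (sfx L p.1.val)
      ∧ p.2.2 = Yv φB (sfx L (p.1.val - 1)) then
    (⟨p.1.val - 1, lt_of_le_of_lt (Nat.sub_le _ _) p.1.isLt⟩, p.2)
  else p

open scoped Classical in
/-- The `B`-side swapping involution. -/
noncomputable def fBfun (φA : M true →* FA) (φB : M false →* FB) (L : List (Σ b, M b)) :
    Fin (L.length + 1) × FA × FB → Fin (L.length + 1) × FA × FB := fun p =>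
  if h : p.1.val + 1 ≤ L.length ∧ Bpos L (p.1.val + 1) ∧ p.2.2 = Yv φB (sfx L (p.1.val + 1))
      ∧ p.2.1 = Xv φA (sfx L p.1.val) then
    (⟨p.1.val + 1, Nat.lt_succ_of_le h.1⟩, p.2)
  else if h2 : 1 ≤ p.1.val ∧ Bpos L p.1.val ∧ p.2.2 = Yv φB (sfx L p.1.val)
      ∧ p.2.1 = Xv φA (sfx L (p.1.val - 1)) then
    (⟨p.1.val - 1, lt_of_le_of_lt (Nat.sub_le _ _) p.1.isLt⟩, p.2)
  else p

section eval
variable (φA : M true →* FA) (φB : M false →* FB) (L : List (Σ b, M b))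
  (i : Fin (L.length + 1)) (x : FA) (y : FB)

lemma fA_pos1 (h : i.val + 1 ≤ L.length ∧ Apos L (i.val + 1) ∧ x = Xv φA (sfx L (i.val + 1))
      ∧ y = Yv φB (sfx L i.val)) :
    fAfun φA φB L (i, x, y) = (⟨i.val + 1, Nat.lt_succ_of_le h.1⟩, x, y) := dif_pos h

lemma fA_pos2
    (hn : ¬(i.val + 1 ≤ L.length ∧ Apos L (i.val + 1) ∧ x = Xv φA (sfx L (i.val + 1))
      ∧ y = Yv φB (sfx L i.val)))
    (h : 1 ≤ i.val ∧ Apos L i.val ∧ x = Xv φA (sfx L i.val) ∧ y = Yv φB (sfx L (i.val - 1))) :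
    fAfun φA φB L (i, x, y)
      = (⟨i.val - 1, lt_of_le_of_lt (Nat.sub_le _ _) i.isLt⟩, x, y) :=
  (dif_neg hn).trans (dif_pos h)

lemma fA_neg
    (hn : ¬(i.val + 1 ≤ L.length ∧ Apos L (i.val + 1) ∧ x = Xv φA (sfx L (i.val + 1))
      ∧ y = Yv φB (sfx L i.val)))
    (hn2 : ¬(1 ≤ i.val ∧ Apos L i.val ∧ x = Xv φA (sfx L i.val)
      ∧ y = Yv φB (sfx L (i.val - 1)))) :
    fAfun φA φB L (i, x, y) = (i, x, y) :=
  (dif_neg hn).trans (dif_neg hn2)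

lemma fB_pos1 (h : i.val + 1 ≤ L.length ∧ Bpos L (i.val + 1) ∧ y = Yv φB (sfx L (i.val + 1))
      ∧ x = Xv φA (sfx L i.val)) :
    fBfun φA φB L (i, x, y) = (⟨i.val + 1, Nat.lt_succ_of_le h.1⟩, x, y) := dif_pos h

lemma fB_pos2
    (hn : ¬(i.val + 1 ≤ L.length ∧ Bpos L (i.val + 1) ∧ y = Yv φB (sfx L (i.val + 1))
      ∧ x = Xv φA (sfx L i.val)))
    (h : 1 ≤ i.val ∧ Bpos L i.val ∧ y = Yv φB (sfx L i.val) ∧ x = Xv φA (sfx L (i.val - 1))) :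
    fBfun φA φB L (i, x, y)
      = (⟨i.val - 1, lt_of_le_of_lt (Nat.sub_le _ _) i.isLt⟩, x, y) :=
  (dif_neg hn).trans (dif_pos h)

lemma fB_neg
    (hn : ¬(i.val + 1 ≤ L.length ∧ Bpos L (i.val + 1) ∧ y = Yv φB (sfx L (i.val + 1))
      ∧ x = Xv φA (sfx L i.val)))
    (hn2 : ¬(1 ≤ i.val ∧ Bpos L i.val ∧ y = Yv φB (sfx L i.val)
      ∧ x = Xv φA (sfx L (i.val - 1)))) :
    fBfun φA φB L (i, x, y) = (i, x, y) :=
  (dif_neg hn).trans (dif_neg hn2)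

end eval

lemma fAfun_invol (φA : M true →* FA) (φB : M false →* FB) (L : List (Σ b, M b))
    (hch : L.Chain' fun c c' => c.1 ≠ c'.1) :
    Function.Involutive (fAfun φA φB L) := by
  rintro ⟨i, x, y⟩
  by_cases h1 : i.val + 1 ≤ L.length ∧ Apos L (i.val + 1) ∧ x = Xv φA (sfx L (i.val + 1))
      ∧ y = Yv φB (sfx L i.val)
  · rw [fA_pos1 φA φB L i x y h1]
    rw [fA_pos2 φA φB L ⟨i.val + 1, Nat.lt_succ_of_le h1.1⟩ x y
      (by rintro ⟨ha, hb, -, -⟩; exact not_pos_pos hch ha h1.2.1 hb)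
      ⟨Nat.le_add_left _ _, h1.2.1, h1.2.2.1, by simpa using h1.2.2.2⟩]
    ext <;> simp
  · by_cases h2 : 1 ≤ i.val ∧ Apos L i.val ∧ x = Xv φA (sfx L i.val)
        ∧ y = Yv φB (sfx L (i.val - 1))
    · rw [fA_pos2 φA φB L i x y h1 h2]
      rw [fA_pos1 φA φB L ⟨i.val - 1, lt_of_le_of_lt (Nat.sub_le _ _) i.isLt⟩ x y
        ⟨show i.val - 1 + 1 ≤ L.length from by have := i.isLt; omega,
         by rw [Nat.sub_add_cancel h2.1]; exact h2.2.1,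
         by rw [Nat.sub_add_cancel h2.1]; exact h2.2.2.1, h2.2.2.2⟩]
      ext <;> simp [Nat.sub_add_cancel h2.1]
    · rw [fA_neg φA φB L i x y h1 h2, fA_neg φA φB L i x y h1 h2]

lemma fBfun_invol (φA : M true →* FA) (φB : M false →* FB) (L : List (Σ b, M b))
    (hch : L.Chain' fun c c' => c.1 ≠ c'.1) :
    Function.Involutive (fBfun φA φB L) := by
  rintro ⟨i, x, y⟩
  by_cases h1 : i.val + 1 ≤ L.length ∧ Bpos L (i.val + 1) ∧ y = Yv φB (sfx L (i.val + 1))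
      ∧ x = Xv φA (sfx L i.val)
  · rw [fB_pos1 φA φB L i x y h1]
    rw [fB_pos2 φA φB L ⟨i.val + 1, Nat.lt_succ_of_le h1.1⟩ x y
      (by rintro ⟨ha, hb, -, -⟩; exact not_pos_pos hch ha h1.2.1 hb)
      ⟨Nat.le_add_left _ _, h1.2.1, h1.2.2.1, by simpa using h1.2.2.2⟩]
    ext <;> simp
  · by_cases h2 : 1 ≤ i.val ∧ Bpos L i.val ∧ y = Yv φB (sfx L i.val)
        ∧ x = Xv φA (sfx L (i.val - 1))
    · rw [fB_pos2 φA φB L i x y h1 h2]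
      rw [fB_pos1 φA φB L ⟨i.val - 1, lt_of_le_of_lt (Nat.sub_le _ _) i.isLt⟩ x y
        ⟨show i.val - 1 + 1 ≤ L.length from by have := i.isLt; omega,
         by rw [Nat.sub_add_cancel h2.1]; exact h2.2.1,
         by rw [Nat.sub_add_cancel h2.1]; exact h2.2.2.1, h2.2.2.2⟩]
      ext <;> simp [Nat.sub_add_cancel h2.1]
    · rw [fB_neg φA φB L i x y h1 h2, fB_neg φA φB L i x y h1 h2]




/-- Left translation on the middle coordinate. -/
def midA (n : ℕ) : FA →* Equiv.Perm (Fin (n + 1) × FA × FB) :=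
  MonoidHom.mk' (fun u => Equiv.prodCongr (Equiv.refl _)
    (Equiv.prodCongr (Equiv.mulLeft u) (Equiv.refl _)))
    (by intro u v; ext ⟨i, x, y⟩ : 1 <;> simp [Equiv.Perm.mul_apply, mul_assoc])

/-- Left translation on the last coordinate. -/
def midB (n : ℕ) : FB →* Equiv.Perm (Fin (n + 1) × FA × FB) :=
  MonoidHom.mk' (fun u => Equiv.prodCongr (Equiv.refl _)
    (Equiv.prodCongr (Equiv.refl _) (Equiv.mulLeft u)))
    (by intro u v; ext ⟨i, x, y⟩ : 1 <;> simp [Equiv.Perm.mul_apply, mul_assoc])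

variable (φA : M true →* FA) (φB : M false →* FB) (L : List (Σ b, M b))
  (hch : L.Chain' fun c c' => c.1 ≠ c'.1)

/-- The `A`-side involution as a permutation. -/
noncomputable def fAperm : Equiv.Perm (Fin (L.length + 1) × FA × FB) :=
  (fAfun_invol φA φB L hch).toPerm _

/-- The `B`-side involution as a permutation. -/
noncomputable def fBperm : Equiv.Perm (Fin (L.length + 1) × FA × FB) :=
  (fBfun_invol φA φB L hch).toPerm _

/-- The permutation representation of `M true`. -/
noncomputable def rhoA : M true →* Equiv.Perm (Fin (L.length + 1) × FA × FB) :=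
  ((MulAut.conj (fAperm φA φB L hch)).toMonoidHom).comp ((midA L.length).comp φA)

/-- The permutation representation of `M false`. -/
noncomputable def rhoB : M false →* Equiv.Perm (Fin (L.length + 1) × FA × FB) :=
  ((MulAut.conj (fBperm φA φB L hch)).toMonoidHom).comp ((midB L.length).comp φB)

lemma rhoA_apply (a : M true) (p : Fin (L.length + 1) × FA × FB) :
    rhoA φA φB L hch a p
      = fAfun φA φB L ((fAfun φA φB L p).1, φA a * (fAfun φA φB L p).2.1,
          (fAfun φA φB L p).2.2) := rfl

lemma rhoB_apply (b : M false) (p : Fin (L.length + 1) × FA × FB) :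
    rhoB φA φB L hch b p
      = fBfun φA φB L ((fBfun φA φB L p).1, (fBfun φA φB L p).2.1,
          φB b * (fBfun φA φB L p).2.2) := rfl

/-- The combined family of permutation representations. -/
noncomputable def Psi : ∀ b, M b →* Equiv.Perm (Fin (L.length + 1) × FA × FB) :=
  fun b => match b with
  | true => rhoA φA φB L hch
  | false => rhoB φA φB L hch

lemma state_eq
    (hφA : ∀ a : M true, (⟨true, a⟩ : Σ b, M b) ∈ L → φA a ≠ 1)
    (hφB : ∀ b : M false, (⟨false, b⟩ : Σ b, M b) ∈ L → φB b ≠ 1) :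
    ∀ l (h : l <:+ L),
      (CoprodI.lift (Psi φA φB L hch)) ((l.map fun c => CoprodI.of c.2).prod)
        (⟨0, Nat.succ_pos _⟩, (1 : FA), (1 : FB))
      = (⟨l.length, Nat.lt_succ_of_le h.length_le⟩, Xv φA l, Yv φB l) := by
  intro l
  induction l with
  | nil => intro h; simp
  | cons c l ih =>
    intro h
    have hl : l <:+ L := (List.suffix_cons c l).trans h
    have hmem : c ∈ L := h.subset (List.mem_cons_self)
    have hsf : sfx L l.length = l := sfx_of_suffix hl
    have hsf1 : sfx L (l.length + 1) = c :: l := by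
      have := sfx_of_suffix h
      simpa using this
    have hbound : l.length + 1 ≤ L.length := by
      have := h.length_le
      simpa using this
    rw [List.map_cons, List.prod_cons, map_mul, Equiv.Perm.mul_apply, ih hl]
    obtain ⟨b, m⟩ := c
    cases b
    · -- B-letter
      have hm1 : φB m ≠ 1 := hφB m hmem
      have hBpos : Bpos L (l.length + 1) := by
        rw [Bpos, hsf1]; rfl
      have hlift : (CoprodI.lift (Psi φA φB L hch)) (CoprodI.of (⟨false, m⟩ : Σ b, M b).2)
          = rhoB φA φB L hch m := by
        rw [CoprodI.lift_of]; rfl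
      rw [hlift, rhoB_apply]
      have e1 : fBfun φA φB L (⟨l.length, Nat.lt_succ_of_le hl.length_le⟩, Xv φA l, Yv φB l)
          = (⟨l.length, Nat.lt_succ_of_le hl.length_le⟩, Xv φA l, Yv φB l) := by
        refine fB_neg φA φB L _ _ _ ?_ ?_
        · rintro ⟨-, -, h3, -⟩
          rw [hsf1, Yv_consB] at h3
          exact hm1 (right_eq_mul.mp h3)
        · rintro ⟨-, hb, -, -⟩
          exact not_pos_pos hch hbound hb hBpos
      rw [e1]
      have e2 : fBfun φA φB L (⟨l.length, Nat.lt_succ_of_le hl.length_le⟩,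
            Xv φA l, φB m * Yv φB l)
          = (⟨l.length + 1, Nat.lt_succ_of_le hbound⟩, Xv φA l, φB m * Yv φB l) := by
        refine fB_pos1 φA φB L _ _ _ ⟨hbound, hBpos, ?_, ?_⟩
        · rw [hsf1, Yv_consB]
        · rw [hsf]
      simp only [e2]
      simp [hsf1]
    · -- A-letter
      have hm1 : φA m ≠ 1 := hφA m hmem
      have hApos : Apos L (l.length + 1) := by
        rw [Apos, hsf1]; rfl
      have hlift : (CoprodI.lift (Psi φA φB L hch)) (CoprodI.of (⟨true, m⟩ : Σ b, M b).2)
          = rhoA φA φB L hch m := by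
        rw [CoprodI.lift_of]; rfl
      rw [hlift, rhoA_apply]
      have e1 : fAfun φA φB L (⟨l.length, Nat.lt_succ_of_le hl.length_le⟩, Xv φA l, Yv φB l)
          = (⟨l.length, Nat.lt_succ_of_le hl.length_le⟩, Xv φA l, Yv φB l) := by
        refine fA_neg φA φB L _ _ _ ?_ ?_
        · rintro ⟨-, -, h3, -⟩
          rw [hsf1, Xv_consA] at h3
          exact hm1 (right_eq_mul.mp h3)
        · rintro ⟨-, hb, -, -⟩
          exact not_pos_pos hch hbound hb hApos
      rw [e1]
      have e2 : fAfun φA φB L (⟨l.length, Nat.lt_succ_of_le hl.length_le⟩,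
            φA m * Xv φA l, Yv φB l)
          = (⟨l.length + 1, Nat.lt_succ_of_le hbound⟩, φA m * Xv φA l, Yv φB l) := by
        refine fA_pos1 φA φB L _ _ _ ⟨hbound, hApos, ?_, ?_⟩
        · rw [hsf1, Xv_consA]
        · rw [hsf]
      simp only [e2]
      simp [hsf1]

theorem rf_coprodI {M : Bool → Type u} [∀ b, Group (M b)]
    (hRF : ∀ b, ResiduallyFinite (M b)) : ResiduallyFinite (Monoid.CoprodI M) := by
  classical
  intro g hg
  set w : Word M := Word.equiv g with hw
  have hprod : w.prod = g := Word.equiv.symm_apply_apply g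
  set L : List (Σ b, M b) := w.toList with hL
  have hch : L.Chain' fun c c' => c.1 ≠ c'.1 := w.chain_ne
  have hne1 : ∀ c ∈ L, c.2 ≠ 1 := w.ne_one
  have hLne : L ≠ [] := by
    intro h
    apply hg
    rw [← hprod]
    show (L.map fun c => CoprodI.of c.2).prod = 1
    rw [h]; simp
  -- the A-side finite quotient
  set fa : (Σ b, M b) → Option (M true) :=
    (fun c => match c with | ⟨true, a⟩ => some a | ⟨false, _⟩ => none) with hfa
  set la : List (M true) := L.filterMap fa with hla
  have hmema : ∀ a : M true, (⟨true, a⟩ : Σ b, M b) ∈ L → a ∈ la := fun a h =>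
    List.mem_filterMap.mpr ⟨⟨true, a⟩, h, rfl⟩
  have hla1 : ∀ i : Fin la.length, la.get i ≠ 1 := by
    intro i h1
    have hmm : la.get i ∈ L.filterMap fa := by
      rw [← hla]; exact List.get_mem la i
    obtain ⟨c, hcL, hc⟩ := List.mem_filterMap.mp hmm
    obtain ⟨b, m⟩ := c
    cases b
    · simp [hfa] at hc
    · simp only [hfa] at hc
      rw [Option.some_inj] at hc
      exact hne1 _ hcL (by rw [show m = la.get i from hc, h1])
  have hexa : ∀ i : Fin la.length,
      ∃ (F : Type) (_ : Group F) (_ : Finite F) (φ : M true →* F), φ (la.get i) ≠ 1 :=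
    fun i => hRF true _ (hla1 i)
  choose Fa gFa fFa φa hφa using hexa
  letI : ∀ i, Group (Fa i) := gFa
  letI : ∀ i, Finite (Fa i) := fFa
  let FAt : Type := ∀ i, Fa i
  let φA : M true →* FAt :=
    { toFun := fun a i => φa i a
      map_one' := by funext i; exact map_one (φa i)
      map_mul' := by intro x y; funext i; exact map_mul (φa i) x y }
  have hφA : ∀ a : M true, (⟨true, a⟩ : Σ b, M b) ∈ L → φA a ≠ 1 := by
    intro a hmem h1
    obtain ⟨i, hi⟩ := List.mem_iff_get.mp (hmema a hmem)
    apply hφa i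
    rw [hi]
    exact congrFun h1 i
  -- the B-side finite quotient
  set fb : (Σ b, M b) → Option (M false) :=
    (fun c => match c with | ⟨true, _⟩ => none | ⟨false, b⟩ => some b) with hfb
  set lb : List (M false) := L.filterMap fb with hlb
  have hmemb : ∀ a : M false, (⟨false, a⟩ : Σ b, M b) ∈ L → a ∈ lb := fun a h =>
    List.mem_filterMap.mpr ⟨⟨false, a⟩, h, rfl⟩
  have hlb1 : ∀ i : Fin lb.length, lb.get i ≠ 1 := by
    intro i h1
    have hmm : lb.get i ∈ L.filterMap fb := by
      rw [← hlb]; exact List.get_mem lb i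
    obtain ⟨c, hcL, hc⟩ := List.mem_filterMap.mp hmm
    obtain ⟨b, m⟩ := c
    cases b
    · simp only [hfb] at hc
      rw [Option.some_inj] at hc
      exact hne1 _ hcL (by rw [show m = lb.get i from hc, h1])
    · simp [hfb] at hc
  have hexb : ∀ i : Fin lb.length,
      ∃ (F : Type) (_ : Group F) (_ : Finite F) (φ : M false →* F), φ (lb.get i) ≠ 1 :=
    fun i => hRF false _ (hlb1 i)
  choose Fb gFb fFb φb hφb using hexb
  letI : ∀ i, Group (Fb i) := gFb
  letI : ∀ i, Finite (Fb i) := fFb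
  let FBt : Type := ∀ i, Fb i
  let φB : M false →* FBt :=
    { toFun := fun a i => φb i a
      map_one' := by funext i; exact map_one (φb i)
      map_mul' := by intro x y; funext i; exact map_mul (φb i) x y }
  have hφB : ∀ a : M false, (⟨false, a⟩ : Σ b, M b) ∈ L → φB a ≠ 1 := by
    intro a hmem h1
    obtain ⟨i, hi⟩ := List.mem_iff_get.mp (hmemb a hmem)
    apply hφb i
    rw [hi]
    exact congrFun h1 i
  -- assemble
  let Φ : Monoid.CoprodI M →* Equiv.Perm (Fin (L.length + 1) × FAt × FBt) :=
    CoprodI.lift (Psi φA φB L hch)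
  have hstate := state_eq φA φB L hch hφA hφB L (List.suffix_refl L)
  have hΦg : Φ g (⟨0, Nat.succ_pos _⟩, 1, 1)
      = (⟨L.length, Nat.lt_succ_of_le le_rfl⟩, Xv φA L, Yv φB L) := by
    rw [← hprod]
    exact hstate
  refine ⟨Equiv.Perm (Fin (L.length + 1) × FAt × FBt), inferInstance, inferInstance, Φ, ?_⟩
  intro h1
  rw [h1] at hΦg
  have : (0 : ℕ) = L.length := congrArg (fun q => (q.1 : Fin (L.length+1)).val) hΦg
  exact hLne (List.length_eq_zero_iff.mp this.symm)

end RFFP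

/-- The family `b ↦ cond b (ULift A) (ULift B)`. -/
def RFFP.Mfam (A : Type u) (B : Type v) : Bool → Type (max u v) :=
  fun b => cond b (ULift.{v} A) (ULift.{u} B)

instance {A : Type u} {B : Type v} [Group A] [Group B] : ∀ b, Group (RFFP.Mfam A B b) :=
  fun b => by
    cases b
    · exact inferInstanceAs (Group (ULift.{u} B))
    · exact inferInstanceAs (Group (ULift.{v} A))

/-- The comparison map `A ∗ B →* CoprodI (Mfam A B)`. -/
def RFFP.eCop {A : Type u} {B : Type v} [Group A] [Group B] :
    Monoid.Coprod A B →* Monoid.CoprodI (RFFP.Mfam A B) :=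
  Monoid.Coprod.lift
    ((Monoid.CoprodI.of (M := RFFP.Mfam A B) (i := true)).comp
      (MulEquiv.ulift.symm : A ≃* ULift.{v} A).toMonoidHom)
    ((Monoid.CoprodI.of (M := RFFP.Mfam A B) (i := false)).comp
      (MulEquiv.ulift.symm : B ≃* ULift.{u} B).toMonoidHom)

/-- The retraction `CoprodI (Mfam A B) →* A ∗ B`. -/
def RFFP.rCop {A : Type u} {B : Type v} [Group A] [Group B] :
    Monoid.CoprodI (RFFP.Mfam A B) →* Monoid.Coprod A B :=
  Monoid.CoprodI.lift fun b => match b with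
    | true => Monoid.Coprod.inl.comp (MulEquiv.ulift (α := A)).toMonoidHom
    | false => Monoid.Coprod.inr.comp (MulEquiv.ulift (α := B)).toMonoidHom

lemma RFFP.rCop_eCop {A : Type u} {B : Type v} [Group A] [Group B]
    (x : Monoid.Coprod A B) : RFFP.rCop (RFFP.eCop x) = x := by
  have : (RFFP.rCop (A := A) (B := B)).comp RFFP.eCop = MonoidHom.id _ := by
    apply Monoid.Coprod.hom_ext
    · ext a
      simp only [MonoidHom.comp_apply, MonoidHom.id_apply, RFFP.eCop, RFFP.rCop,
        Monoid.Coprod.lift_apply_inl, Monoid.Coprod.lift_apply_inr, Monoid.CoprodI.lift_of,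
        MulEquiv.coe_toMonoidHom]
      exact Monoid.CoprodI.lift_of _ _
    · ext b
      simp only [MonoidHom.comp_apply, MonoidHom.id_apply, RFFP.eCop, RFFP.rCop,
        Monoid.Coprod.lift_apply_inl, Monoid.Coprod.lift_apply_inr, Monoid.CoprodI.lift_of,
        MulEquiv.coe_toMonoidHom]
      exact Monoid.CoprodI.lift_of _ _
  exact DFunLike.congr_fun this x

/-- The free product of two residually finite groups is residually finite. -/
theorem residuallyFinite_free_product {A B : Type*} [Group A] [Group B]
    (hA : ResiduallyFinite A) (hB : ResiduallyFinite B) :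
    ResiduallyFinite (Monoid.Coprod A B) := by
  intro g hg
  have hRF : ∀ b, ResiduallyFinite (RFFP.Mfam A B b) := by
    intro b
    cases b
    · intro x hx
      obtain ⟨F, iG, iF, φ, hφ⟩ := hB (MulEquiv.ulift x)
        (fun h => hx (MulEquiv.ulift.injective (h.trans (map_one _).symm)))
      exact ⟨F, iG, iF, φ.comp (MulEquiv.ulift (α := B)).toMonoidHom, hφ⟩
    · intro x hx
      obtain ⟨F, iG, iF, φ, hφ⟩ := hA (MulEquiv.ulift x)
        (fun h => hx (MulEquiv.ulift.injective (h.trans (map_one _).symm)))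
      exact ⟨F, iG, iF, φ.comp (MulEquiv.ulift (α := A)).toMonoidHom, hφ⟩
  have heg : RFFP.eCop g ≠ 1 := by
    intro h
    apply hg
    rw [← RFFP.rCop_eCop g, h, map_one]
  obtain ⟨F, iG, iF, φ, hφ⟩ := RFFP.rf_coprodI hRF (RFFP.eCop g) heg
  exact ⟨F, iG, iF, φ.comp RFFP.eCop, hφ⟩
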